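/- The weighted integrals of the derivatives of φ₀ over the reference convex quadrilateral (entries of the coefficient matrix in the proof of Lemma 3.1): ∫_Q (∂φ₀/∂η)·ξ dλ = −8αβ/D, ∫_Q (∂φ₀/∂ξ)·ξ dλ = (4α² − 12β² − 12)/D, ∫_Q (∂φ₀/∂η)·η dλ = (−12α² + 4β² − 12)/D, and ∫_Q (∂φ₀/∂ξ)·η dλ = −8αβ/D, where D = α² + β² + 3. -/

import Mathlib

open MeasureTheory

noncomputable section

/-- Vertex a₁ of the reference convex quadrilateral (points written as (η, ξ)). -/
def a1 (α β : ℝ) : ℝ × ℝ := (-1 - α, 1 - β)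

/-- Vertex a₂. -/
def a2 (α β : ℝ) : ℝ × ℝ := (-1 + α, -1 + β)

/-- Vertex a₃. -/
def a3 (α β : ℝ) : ℝ × ℝ := (1 - α, -1 - β)

/-- Vertex a₄. -/
def a4 (α β : ℝ) : ℝ × ℝ := (1 + α, 1 + β)

/-- The reference convex quadrilateral Q = conv{a₁, a₂, a₃, a₄}. -/
def Quad (α β : ℝ) : Set (ℝ × ℝ) :=
  convexHull ℝ {a1 α β, a2 α β, a3 α β, a4 α β}

/-- Average of `u` over the segment from `P` to `R`:
    ⨍ u = ∫_{t ∈ [0,1]} u((1−t)P + tR) dt. -/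
def edgeAvg (P R : ℝ × ℝ) (u : ℝ × ℝ → ℝ) : ℝ :=
  ∫ t in (0:ℝ)..1, u ((1 - t) • P + t • R)

/-- Average of `u` over the quadrilateral Q: (∫_Q u dλ)/λ(Q). -/
def quadAvg (α β : ℝ) (u : ℝ × ℝ → ℝ) : ℝ :=
  (∫ p in Quad α β, u p) / (volume (Quad α β)).toReal

/-- The basis function φ₀ of the QLTZ element:
φ₀ = −3(3ξ² + 3η² − 2αξ − 2βη − (4 + α² + β²))/(2(α² + β² + 3)),
with ξ(p) = p.2 and η(p) = p.1. -/
def phi0 (α β : ℝ) (p : ℝ × ℝ) : ℝ :=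
  -3 * (3 * p.2 ^ 2 + 3 * p.1 ^ 2 - 2 * α * p.2 - 2 * β * p.1 - (4 + α ^ 2 + β ^ 2)) /
    (2 * (α ^ 2 + β ^ 2 + 3))

/-- φ₁ = −(3/4)ξ² + ((β−1)/2)η + (3+β²)/4 − ((β²−β+3)/6)φ₀. -/
def phi1 (α β : ℝ) (p : ℝ × ℝ) : ℝ :=
  -(3 / 4) * p.2 ^ 2 + (β - 1) / 2 * p.1 + (3 + β ^ 2) / 4 -
    (β ^ 2 - β + 3) / 6 * phi0 α β p

/-- φ₂ = −(3/4)η² + ((α−1)/2)ξ + (3+α²)/4 − ((α²−α+3)/6)φ₀. -/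
def phi2 (α β : ℝ) (p : ℝ × ℝ) : ℝ :=
  -(3 / 4) * p.1 ^ 2 + (α - 1) / 2 * p.2 + (3 + α ^ 2) / 4 -
    (α ^ 2 - α + 3) / 6 * phi0 α β p

/-- φ₃ = −(3/4)ξ² + ((β+1)/2)η + (3+β²)/4 − ((β²+β+3)/6)φ₀. -/
def phi3 (α β : ℝ) (p : ℝ × ℝ) : ℝ :=
  -(3 / 4) * p.2 ^ 2 + (β + 1) / 2 * p.1 + (3 + β ^ 2) / 4 -
    (β ^ 2 + β + 3) / 6 * phi0 α β p

/-- φ₄ = −(3/4)η² + ((α+1)/2)ξ + (3+α²)/4 − ((α²+α+3)/6)φ₀. -/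
def phi4 (α β : ℝ) (p : ℝ × ℝ) : ℝ :=
  -(3 / 4) * p.1 ^ 2 + (α + 1) / 2 * p.2 + (3 + α ^ 2) / 4 -
    (α ^ 2 + α + 3) / 6 * phi0 α β p


-- ===================== auxiliary lemmas =====================

section Aux

open Set

/-- Derivative of φ₀. -/
lemma hasFDerivAt_phi0 (α β : ℝ) (p : ℝ × ℝ) :
    HasFDerivAt (phi0 α β)
      ((((-3*(6*p.1 - 2*β))/(2*(α^2+β^2+3))) • ContinuousLinearMap.fst ℝ ℝ ℝ)
        + (((-3*(6*p.2 - 2*α))/(2*(α^2+β^2+3))) • ContinuousLinearMap.snd ℝ ℝ ℝ)) p := by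
  have h1 : HasFDerivAt (fun q : ℝ × ℝ => q.1) (ContinuousLinearMap.fst ℝ ℝ ℝ) p :=
    hasFDerivAt_fst
  have h2 : HasFDerivAt (fun q : ℝ × ℝ => q.2) (ContinuousLinearMap.snd ℝ ℝ ℝ) p :=
    hasFDerivAt_snd
  have H := (((((((h2.mul h2).const_mul 3).add ((h1.mul h1).const_mul 3)).sub
      (h2.const_mul (2*α))).sub (h1.const_mul (2*β))).sub_const (4 + α^2 + β^2)).const_mul (-3)
    |>.mul_const ((2*(α^2+β^2+3))⁻¹))
  convert H using 1
  case e'_11 => ext q; simp only [phi0, Pi.add_apply, Pi.sub_apply, Pi.mul_apply]; rw [div_eq_mul_inv]; ring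
  case e'_12 =>
    have hD : (α^2+β^2+3) ≠ 0 := by positivity
    ext v <;> simp <;> field_simp <;> ring
  all_goals rfl

lemma fderiv_phi0_eta (α β : ℝ) (p : ℝ × ℝ) :
    fderiv ℝ (phi0 α β) p (1, 0) = (3*β - 9*p.1)/(α^2+β^2+3) := by
  rw [(hasFDerivAt_phi0 α β p).fderiv]
  have hD : (α^2+β^2+3 : ℝ) ≠ 0 := by positivity
  simp
  field_simp
  ring

lemma fderiv_phi0_xi (α β : ℝ) (p : ℝ × ℝ) :
    fderiv ℝ (phi0 α β) p (0, 1) = (3*α - 9*p.2)/(α^2+β^2+3) := by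
  rw [(hasFDerivAt_phi0 α β p).fderiv]
  have hD : (α^2+β^2+3 : ℝ) ≠ 0 := by positivity
  simp
  field_simp
  ring

/-- The standard triangle. -/
def stdTri : Set (ℝ × ℝ) := {p | 0 ≤ p.1 ∧ 0 ≤ p.2 ∧ p.1 + p.2 ≤ 1}

lemma stdTri_eq : stdTri = convexHull ℝ {((0:ℝ),(0:ℝ)), ((1:ℝ),(0:ℝ)), ((0:ℝ),(1:ℝ))} := by
  apply Subset.antisymm
  · intro p hp
    obtain ⟨hx, hy, hxy⟩ := hp
    have hhull := convex_convexHull ℝ {((0:ℝ),(0:ℝ)), ((1:ℝ),(0:ℝ)), ((0:ℝ),(1:ℝ))}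
    have h0 : ((0:ℝ),(0:ℝ)) ∈ convexHull ℝ {((0:ℝ),(0:ℝ)), ((1:ℝ),(0:ℝ)), ((0:ℝ),(1:ℝ))} :=
      subset_convexHull ℝ _ (by simp)
    have h1 : ((1:ℝ),(0:ℝ)) ∈ convexHull ℝ {((0:ℝ),(0:ℝ)), ((1:ℝ),(0:ℝ)), ((0:ℝ),(1:ℝ))} :=
      subset_convexHull ℝ _ (by simp)
    have h2 : ((0:ℝ),(1:ℝ)) ∈ convexHull ℝ {((0:ℝ),(0:ℝ)), ((1:ℝ),(0:ℝ)), ((0:ℝ),(1:ℝ))} :=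
      subset_convexHull ℝ _ (by simp)
    rcases eq_or_lt_of_le (add_nonneg hx hy) with h | h
    · have hx0 : p.1 = 0 := by linarith [hx, hy]
      have hy0 : p.2 = 0 := by linarith
      have : p = ((0:ℝ),(0:ℝ)) := Prod.ext hx0 hy0
      rw [this]; exact h0
    · set s := p.1 + p.2 with hs
      have hmid : ((p.1/s, p.2/s) : ℝ × ℝ) ∈
          convexHull ℝ {((0:ℝ),(0:ℝ)), ((1:ℝ),(0:ℝ)), ((0:ℝ),(1:ℝ))} := by
        have := hhull h1 h2 (div_nonneg hx h.le) (div_nonneg hy h.le)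
          (by field_simp; exact hs.symm)
        convert this using 1
        simp [Prod.ext_iff]
      have := hhull h0 hmid (by linarith : (0:ℝ) ≤ 1 - s) (le_of_lt h) (by ring)
      convert this using 1
      have hs0 : s ≠ 0 := ne_of_gt h
      simp [Prod.ext_iff, Prod.smul_def]
      constructor <;> field_simp
  · apply convexHull_min
    · intro p hp
      rcases hp with h | h | h <;> (rw [h]; norm_num [stdTri])
    · rintro p ⟨hp1, hp2, hp3⟩ q ⟨hq1, hq2, hq3⟩ a b ha hb hab
      simp only [stdTri, Set.mem_setOf_eq, Prod.fst_add, Prod.snd_add, Prod.smul_fst,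
        Prod.smul_snd, smul_eq_mul]
      refine ⟨by nlinarith, by nlinarith, by nlinarith⟩

lemma isCompact_stdTri : IsCompact stdTri := by
  rw [stdTri_eq]
  exact (Set.toFinite _).isCompact_convexHull ℝ

lemma measurableSet_stdTri : MeasurableSet stdTri := by
  have : IsClosed stdTri := by
    have h1 : IsClosed {p : ℝ × ℝ | 0 ≤ p.1} := isClosed_le continuous_const continuous_fst
    have h2 : IsClosed {p : ℝ × ℝ | 0 ≤ p.2} := isClosed_le continuous_const continuous_snd
    have h3 : IsClosed {p : ℝ × ℝ | p.1 + p.2 ≤ 1} :=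
      isClosed_le (continuous_fst.add continuous_snd) continuous_const
    have : stdTri = ({p : ℝ × ℝ | 0 ≤ p.1} ∩ {p | 0 ≤ p.2}) ∩ {p | p.1 + p.2 ≤ 1} := by
      ext p; simp [stdTri, and_assoc]
    rw [this]; exact (h1.inter h2).inter h3
  exact this.measurableSet

lemma integral_stdTri (g : ℝ × ℝ → ℝ) (hg : Continuous g) :
    ∫ p in stdTri, g p = ∫ x in (0:ℝ)..1, ∫ y in (0:ℝ)..(1-x), g (x, y) := by
  have hint : IntegrableOn g stdTri := hg.continuousOn.integrableOn_compact isCompact_stdTri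
  have hind : Integrable (stdTri.indicator g) := by
    rwa [integrable_indicator_iff measurableSet_stdTri]
  rw [← integral_indicator measurableSet_stdTri]
  rw [Measure.volume_eq_prod] at hind ⊢
  rw [integral_prod _ hind]
  have key : ∀ x : ℝ, (∫ y, stdTri.indicator g (x, y)) =
      (Set.Icc (0:ℝ) 1).indicator (fun x => ∫ y in (0:ℝ)..(1-x), g (x, y)) x := by
    intro x
    rcases le_or_gt 0 x with hx | hx
    · rcases le_or_gt x 1 with hx1 | hx1
      · have heq : ∀ y : ℝ, stdTri.indicator g (x, y) =
            (Set.Icc (0:ℝ) (1-x)).indicator (fun y => g (x, y)) y := by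
          intro y
          by_cases hy : (x, y) ∈ stdTri
          · rw [Set.indicator_of_mem hy, Set.indicator_of_mem]
            exact ⟨hy.2.1, by have := hy.2.2; simpa using by linarith⟩
          · rw [Set.indicator_of_notMem hy, Set.indicator_of_notMem]
            intro hy'
            exact hy ⟨hx, hy'.1, by have := hy'.2; show x + y ≤ 1; linarith⟩
        simp_rw [heq]
        rw [integral_indicator measurableSet_Icc,
          Set.indicator_of_mem (Set.mem_Icc.mpr ⟨hx, hx1⟩)]
        rw [intervalIntegral.integral_of_le (by linarith), ← integral_Icc_eq_integral_Ioc]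
      · have heq : ∀ y : ℝ, stdTri.indicator g (x, y) = 0 := by
          intro y
          apply Set.indicator_of_notMem
          intro hy
          have := hy.2.2; have := hy.2.1; simp at *; linarith
        simp_rw [heq]
        rw [integral_zero, Set.indicator_of_notMem]
        simp; intro; linarith
    · have heq : ∀ y : ℝ, stdTri.indicator g (x, y) = 0 := by
        intro y
        apply Set.indicator_of_notMem
        intro hy
        have := hy.1; simp at this; linarith
      simp_rw [heq]
      rw [integral_zero, Set.indicator_of_notMem]
      simp; intro; linarith
  simp_rw [key]
  rw [integral_indicator measurableSet_Icc,
    intervalIntegral.integral_of_le (by norm_num : (0:ℝ) ≤ 1), ← integral_Icc_eq_integral_Ioc]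

/-- The linear map sending (x,y) to x•u + y•v. -/
def triL (u v : ℝ × ℝ) : (ℝ × ℝ) →ₗ[ℝ] (ℝ × ℝ) where
  toFun p := p.1 • u + p.2 • v
  map_add' p q := by simp [add_smul]; abel
  map_smul' c p := by simp [smul_smul, smul_add]

lemma triL_apply (u v : ℝ × ℝ) (p : ℝ × ℝ) : triL u v p = p.1 • u + p.2 • v := rfl

lemma triL_det (u v : ℝ × ℝ) : LinearMap.det (triL u v) = u.1 * v.2 - u.2 * v.1 := by
  rw [← LinearMap.det_toMatrix (Module.Basis.finTwoProd ℝ)]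
  rw [Matrix.det_fin_two]
  simp [LinearMap.toMatrix_apply, triL_apply, Module.Basis.finTwoProd]
  ring

lemma triA_image (P u v : ℝ × ℝ) :
    (fun p => P + triL u v p) '' stdTri = convexHull ℝ {P, P + u, P + v} := by
  have hA : (fun p => P + triL u v p) =
      ((AffineEquiv.constVAdd ℝ (ℝ × ℝ) P).toAffineMap.comp (triL u v).toAffineMap : _) := by
    funext p
    simp [AffineEquiv.constVAdd, Equiv.constVAdd]
  rw [stdTri_eq, hA, AffineMap.image_convexHull]
  congr 1
  rw [Set.image_insert_eq, Set.image_insert_eq, Set.image_singleton]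
  simp [triL_apply, AffineEquiv.constVAdd, Equiv.constVAdd]

lemma triA_inj (P u v : ℝ × ℝ) (hdet : u.1 * v.2 - u.2 * v.1 ≠ 0) :
    Function.Injective (fun p => P + triL u v p) := by
  intro p q h
  simp only [triL_apply, add_right_inj] at h
  have h1 : p.1 * u.1 + p.2 * v.1 = q.1 * u.1 + q.2 * v.1 := congrArg Prod.fst h
  have h2 : p.1 * u.2 + p.2 * v.2 = q.1 * u.2 + q.2 * v.2 := congrArg Prod.snd h
  have e1 : (p.1 - q.1) * (u.1 * v.2 - u.2 * v.1) = 0 := by linear_combination v.2 * h1 - v.1 * h2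
  have e2 : (p.2 - q.2) * (u.1 * v.2 - u.2 * v.1) = 0 := by linear_combination u.1 * h2 - u.2 * h1
  have := (mul_eq_zero.mp e1).resolve_right hdet
  have := (mul_eq_zero.mp e2).resolve_right hdet
  exact Prod.ext (by linarith) (by linarith)

lemma integral_triangle (P u v : ℝ × ℝ) (hdet : u.1 * v.2 - u.2 * v.1 ≠ 0)
    (g : ℝ × ℝ → ℝ) (hg : Continuous g) :
    ∫ p in convexHull ℝ {P, P + u, P + v}, g p
      = |u.1 * v.2 - u.2 * v.1| *
          ∫ x in (0:ℝ)..1, ∫ y in (0:ℝ)..(1-x), g (P + x • u + y • v) := by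
  rw [← triA_image P u v]
  have hFd : ∀ x ∈ stdTri, HasFDerivWithinAt (fun p => P + triL u v p)
      ((triL u v).toContinuousLinearMap) stdTri x := by
    intro x _
    exact (((triL u v).toContinuousLinearMap.hasFDerivAt).const_add P).hasFDerivWithinAt
  rw [integral_image_eq_integral_abs_det_fderiv_smul volume measurableSet_stdTri hFd
    ((triA_inj P u v hdet).injOn) g]
  have hdet2 : ((triL u v).toContinuousLinearMap : (ℝ × ℝ) →L[ℝ] (ℝ × ℝ)).det
      = u.1 * v.2 - u.2 * v.1 := by
    rw [ContinuousLinearMap.det]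
    simp [triL_det]
  simp_rw [hdet2, smul_eq_mul]
  rw [MeasureTheory.integral_const_mul]
  congr 1
  have := integral_stdTri (fun p => g (P + p.1 • u + p.2 • v))
    (by continuity)
  simp only at this
  rw [← this]
  apply setIntegral_congr_fun measurableSet_stdTri
  intro p _
  simp [triL_apply, add_assoc]

lemma convex_comb3 {s : Set (ℝ × ℝ)} (hs : Convex ℝ s) {x y z : ℝ × ℝ}
    (hx : x ∈ s) (hy : y ∈ s) (hz : z ∈ s) {a b c : ℝ}
    (ha : 0 ≤ a) (hb : 0 ≤ b) (hc : 0 ≤ c) (habc : a + b + c = 1) :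
    a • x + b • y + c • z ∈ s := by
  rcases eq_or_lt_of_le (add_nonneg ha hb) with h | h
  · have ha0 : a = 0 := by linarith
    have hb0 : b = 0 := by linarith
    have hc1 : c = 1 := by linarith
    simp [ha0, hb0, hc1, hz]
  · have key : a • x + b • y = (a + b) • ((a/(a+b)) • x + (b/(a+b)) • y) := by
      rw [smul_add, smul_smul, smul_smul]
      rw [mul_div_cancel₀ _ (ne_of_gt h), mul_div_cancel₀ _ (ne_of_gt h)]
    rw [key]
    exact hs (hs hx hy (div_nonneg ha h.le) (div_nonneg hb h.le) (by field_simp))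
      hz (by linarith) hc habc

variable {α β : ℝ}

lemma seg13_subset_T1 : segment ℝ (a1 α β) (a3 α β) ⊆ convexHull ℝ {a1 α β, a2 α β, a3 α β} := by
  rw [← convexHull_pair]
  exact convexHull_mono (by intro y hy; simp at hy ⊢; tauto)

lemma seg13_subset_T2 : segment ℝ (a1 α β) (a3 α β) ⊆ convexHull ℝ {a1 α β, a3 α β, a4 α β} := by
  rw [← convexHull_pair]
  exact convexHull_mono (by intro y hy; simp at hy ⊢; tauto)

lemma m_mem_seg13 (hα : 0 < α) (hβ : 0 < β) (hαβ : α + β < 1) :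
    ((-β, -α) : ℝ × ℝ) ∈ segment ℝ (a1 α β) (a3 α β) := by
  refine ⟨1 - (1+α-β)/2, (1+α-β)/2, by nlinarith, by nlinarith, by ring, ?_⟩
  simp [a1, a3, Prod.ext_iff, Prod.smul_def]
  constructor <;> ring

lemma quad_eq_union (hα : 0 < α) (hβ : 0 < β) (hαβ : α + β < 1) :
    Quad α β = convexHull ℝ {a1 α β, a2 α β, a3 α β} ∪ convexHull ℝ {a1 α β, a3 α β, a4 α β} := by
  apply Subset.antisymm
  · intro x hx
    rw [Quad] at hx
    have hset : ({a1 α β, a2 α β, a3 α β, a4 α β} : Set (ℝ × ℝ))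
        = insert (a2 α β) {a1 α β, a3 α β, a4 α β} := by
      ext y; simp; tauto
    rw [hset, convexHull_insert ⟨a1 α β, by simp⟩, mem_convexJoin] at hx
    obtain ⟨p, hp, z, hz, hxseg⟩ := hx
    rw [mem_singleton_iff] at hp
    subst hp
    have hset2 : ({a1 α β, a3 α β, a4 α β} : Set (ℝ × ℝ))
        = insert (a4 α β) {a1 α β, a3 α β} := by
      ext y; simp; tauto
    rw [hset2, convexHull_insert ⟨a1 α β, by simp⟩, mem_convexJoin] at hz
    obtain ⟨q, hq, w, hw, hzseg⟩ := hz
    rw [mem_singleton_iff] at hq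
    subst hq
    rw [convexHull_pair] at hw
    obtain ⟨u, u', hu, hu', huu, hxeq⟩ := hxseg
    obtain ⟨c, c', hc, hc', hcc, hzeq⟩ := hzseg
    have hxw : x = u • a2 α β + (u' * c) • a4 α β + (u' * c') • w := by
      rw [← hxeq, ← hzeq]
      rw [smul_add, smul_smul, smul_smul]
      abel
    set t := u' * c with ht
    set e := u' * c' with he
    have htpos : 0 ≤ t := mul_nonneg hu' hc
    have hepos : 0 ≤ e := mul_nonneg hu' hc'
    have hsum : u + t + e = 1 := by
      calc u + t + e = u + u' * (c + c') := by ring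
      _ = 1 := by rw [hcc]; simpa using huu
    set s : ℝ := (1 - α - β)/2 with hs
    have hs0 : 0 < s := by simp [hs]; linarith
    have hs1 : s < 1 := by simp [hs]; linarith
    have hmmem := m_mem_seg13 hα hβ hαβ (α := α) (β := β)
    rcases le_or_gt (t * (1 - s)) (u * s) with hcase | hcase
    · left
      have hxrep : x = (u + t - t/s) • a2 α β + (t/s) • ((-β, -α) : ℝ × ℝ) + e • w := by
        rw [hxw]
        simp only [a2, a4, Prod.ext_iff, Prod.smul_def, Prod.fst_add, Prod.snd_add,
          smul_eq_mul, Prod.smul_fst, Prod.smul_snd]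
        have h0 : (1:ℝ) - α - β ≠ 0 := by linarith
        constructor <;> (rw [hs]; field_simp; ring)
      rw [hxrep]
      refine convex_comb3 (convex_convexHull ℝ _)
        (subset_convexHull ℝ _ (by simp)) (seg13_subset_T1 hmmem) (seg13_subset_T1 hw)
        ?_ (by positivity) hepos ?_
      · rw [sub_nonneg, div_le_iff₀ hs0]; nlinarith
      · field_simp; linear_combination s * hsum
    · right
      have hxrep : x = (t + u - u/(1-s)) • a4 α β + (u/(1-s)) • ((-β, -α) : ℝ × ℝ) + e • w := by
        rw [hxw]
        simp only [a2, a4, Prod.ext_iff, Prod.smul_def, Prod.fst_add, Prod.snd_add,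
          smul_eq_mul, Prod.smul_fst, Prod.smul_snd]
        have h0 : (1:ℝ) + α + β ≠ 0 := by linarith
        have h1s : (1:ℝ) - s = (1 + α + β)/2 := by rw [hs]; ring
        constructor <;> (rw [h1s]; field_simp; ring)
      rw [hxrep]
      have h1s : (0:ℝ) < 1 - s := by linarith
      refine convex_comb3 (convex_convexHull ℝ _)
        (subset_convexHull ℝ _ (by simp)) (seg13_subset_T2 hmmem) (seg13_subset_T2 hw)
        ?_ (by positivity) hepos ?_
      · rw [sub_nonneg, div_le_iff₀ h1s]; nlinarith
      · field_simp; linear_combination (1 - s) * hsum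
  · apply union_subset <;> exact convexHull_mono (by intro y hy; simp at hy ⊢; tauto)

lemma line_null (c : ℝ) : volume {p : ℝ × ℝ | p.1 + p.2 = c} = 0 := by
  have := Measure.addHaar_affineSubspace (volume : Measure (ℝ × ℝ))
    (AffineSubspace.mk' ((c, 0) : ℝ × ℝ) (LinearMap.ker (LinearMap.fst ℝ ℝ ℝ + LinearMap.snd ℝ ℝ ℝ))) ?_
  · convert this using 2
    ext p
    simp only [SetLike.mem_coe, AffineSubspace.mem_mk']
    simp [LinearMap.mem_ker, sub_eq_zero]
    constructor <;> intro h <;> linarith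
  · intro h
    have hd := AffineSubspace.direction_mk' ((c, 0) : ℝ × ℝ)
      (LinearMap.ker (LinearMap.fst ℝ ℝ ℝ + LinearMap.snd ℝ ℝ ℝ))
    rw [h, AffineSubspace.direction_top] at hd
    have h10 : ((1:ℝ),(0:ℝ)) ∈ (LinearMap.ker (LinearMap.fst ℝ ℝ ℝ + LinearMap.snd ℝ ℝ ℝ)) := by
      rw [← hd]; trivial
    simp [LinearMap.mem_ker] at h10


lemma intPoly (a b c0 c1 c2 c3 : ℝ) :
    (∫ y in a..b, (c0 + c1*y + c2*y^2 + c3*y^3)) =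
      c0*(b-a) + c1*(b^2-a^2)/2 + c2*(b^3-a^3)/3 + c3*(b^4-a^4)/4 := by
  have h : ∀ y ∈ Set.uIcc a b, HasDerivAt
      (fun y : ℝ => c0*y + c1/2*y^2 + c2/3*y^3 + c3/4*y^4)
      (c0 + c1*y + c2*y^2 + c3*y^3) y := by
    intro y _
    have H := ((((hasDerivAt_id y).const_mul c0).add
      ((hasDerivAt_pow 2 y).const_mul (c1/2))).add
      ((hasDerivAt_pow 3 y).const_mul (c2/3))).add
      ((hasDerivAt_pow 4 y).const_mul (c3/4))
    convert H using 1
    case e'_9 =>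
      push_cast
      ring
    all_goals rfl
  rw [intervalIntegral.integral_eq_sub_of_hasDerivAt h
    ((Continuous.intervalIntegrable (by continuity) a b))]
  ring

lemma iint_quadratic (c00 c10 c01 c20 c11 c02 : ℝ) :
    (∫ x in (0:ℝ)..1, ∫ y in (0:ℝ)..(1-x),
        (c00 + c10*x + c01*y + c20*x^2 + c11*(x*y) + c02*y^2))
      = c00/2 + (c10+c01)/6 + (c20+c02)/12 + c11/24 := by
  have inner : ∀ x : ℝ, (∫ y in (0:ℝ)..(1-x),
      (c00 + c10*x + c01*y + c20*x^2 + c11*(x*y) + c02*y^2))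
      = (c00 + c10*x + c20*x^2)*(1-x) + (c01 + c11*x)*((1-x)^2)/2 + c02*((1-x)^3)/3 := by
    intro x
    have h2 : (fun y : ℝ => c00 + c10*x + c01*y + c20*x^2 + c11*(x*y) + c02*y^2)
        = fun y : ℝ => (c00 + c10*x + c20*x^2) + (c01 + c11*x)*y + c02*y^2 + 0*y^3 := by
      funext y; ring
    rw [h2, intPoly]; ring
  simp_rw [inner]
  have h3 : (fun x : ℝ => (c00 + c10*x + c20*x^2)*(1-x) + (c01 + c11*x)*((1-x)^2)/2
      + c02*((1-x)^3)/3)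
      = fun x : ℝ => (c00 + c01/2 + c02/3) + (c10 - c00 + c11/2 - c01 - c02)*x
          + (c20 - c10 + c01/2 - c11 + c02)*x^2 + (-c20 + c11/2 - c02/3)*x^3 := by
    funext x; ring
  rw [h3, intPoly]; ring

lemma integral_triangle' (P Q R : ℝ × ℝ)
    (hdet : (Q.1-P.1)*(R.2-P.2) - (Q.2-P.2)*(R.1-P.1) ≠ 0)
    (g : ℝ × ℝ → ℝ) (hg : Continuous g) :
    ∫ p in convexHull ℝ {P, Q, R}, g p
      = |(Q.1-P.1)*(R.2-P.2) - (Q.2-P.2)*(R.1-P.1)| *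
          ∫ x in (0:ℝ)..1, ∫ y in (0:ℝ)..(1-x),
            g (P.1 + x*(Q.1-P.1) + y*(R.1-P.1), P.2 + x*(Q.2-P.2) + y*(R.2-P.2)) := by
  have h1 : P + (Q - P) = Q := by abel
  have h2 : P + (R - P) = R := by abel
  have hdet' : (Q-P).1 * (R-P).2 - (Q-P).2 * (R-P).1 ≠ 0 := by
    simpa using hdet
  have := integral_triangle P (Q - P) (R - P) hdet' g hg
  rw [h1, h2] at this
  rw [this]
  have hco : ∀ x y : ℝ, P + x • (Q - P) + y • (R - P)
      = (P.1 + x*(Q.1-P.1) + y*(R.1-P.1), P.2 + x*(Q.2-P.2) + y*(R.2-P.2)) := by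
    intro x y; simp [Prod.ext_iff]
  simp_rw [hco]
  simp only [Prod.fst_sub, Prod.snd_sub]

lemma integral_quad (hα : 0 < α) (hβ : 0 < β) (hαβ : α + β < 1)
    (g : ℝ × ℝ → ℝ) (hg : Continuous g) :
    ∫ p in Quad α β, g p
      = (4*(1-α-β)) * (∫ x in (0:ℝ)..1, ∫ y in (0:ℝ)..(1-x),
          g (-1 - α + 2*α*x + 2*y, 1 - β + (2*β - 2)*x - 2*y))
      + (4*(1+α+β)) * (∫ x in (0:ℝ)..1, ∫ y in (0:ℝ)..(1-x),
          g (-1 - α + 2*x + (2 + 2*α)*y, 1 - β - 2*x + 2*β*y)) := by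
  rw [quad_eq_union hα hβ hαβ]
  have hT1c : IsCompact (convexHull ℝ {a1 α β, a2 α β, a3 α β}) :=
    (Set.toFinite _).isCompact_convexHull ℝ
  have hT2c : IsCompact (convexHull ℝ {a1 α β, a3 α β, a4 α β}) :=
    (Set.toFinite _).isCompact_convexHull ℝ
  have hnull : volume (convexHull ℝ {a1 α β, a2 α β, a3 α β}
      ∩ convexHull ℝ {a1 α β, a3 α β, a4 α β}) = 0 := by
    have hsub : convexHull ℝ {a1 α β, a2 α β, a3 α β}
        ∩ convexHull ℝ {a1 α β, a3 α β, a4 α β} ⊆ {p : ℝ × ℝ | p.1 + p.2 = -(α+β)} := by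
      rintro p ⟨hp1, hp2⟩
      have hle : p ∈ {q : ℝ × ℝ | q.1 + q.2 ≤ -(α+β)} := by
        refine convexHull_min ?_ (convex_halfSpace_le
          (IsLinearMap.mk (fun a b => by simp; ring) (fun c a => by simp; ring)) _) hp1
        intro q hq
        rcases hq with h | h | h <;> (rw [h]; simp [a1, a2, a3]; linarith)
      have hge : p ∈ {q : ℝ × ℝ | -(α+β) ≤ q.1 + q.2} := by
        refine convexHull_min ?_ (convex_halfSpace_ge
          (IsLinearMap.mk (fun a b => by simp; ring) (fun c a => by simp; ring)) _) hp2
        intro q hq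
        rcases hq with h | h | h <;> (rw [h]; simp [a1, a3, a4]; linarith)
      exact le_antisymm hle hge
    exact measure_mono_null hsub (line_null _)
  rw [integral_union_ae hnull hT2c.isClosed.measurableSet.nullMeasurableSet
    (hg.continuousOn.integrableOn_compact hT1c) (hg.continuousOn.integrableOn_compact hT2c)]
  have hdet1 : ((a2 α β).1-(a1 α β).1)*((a3 α β).2-(a1 α β).2)
      - ((a2 α β).2-(a1 α β).2)*((a3 α β).1-(a1 α β).1) = 4*(1-α-β) := by
    simp [a1, a2, a3]; ring
  have hdet2 : ((a3 α β).1-(a1 α β).1)*((a4 α β).2-(a1 α β).2)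
      - ((a3 α β).2-(a1 α β).2)*((a4 α β).1-(a1 α β).1) = 4*(1+α+β) := by
    simp [a1, a3, a4]; ring
  rw [integral_triangle' (a1 α β) (a2 α β) (a3 α β) (ne_of_gt (by rw [hdet1]; nlinarith)) g hg]
  rw [integral_triangle' (a1 α β) (a3 α β) (a4 α β) (ne_of_gt (by rw [hdet2]; nlinarith)) g hg]
  rw [hdet1, hdet2, abs_of_pos (by nlinarith : (0:ℝ) < 4*(1-α-β)),
    abs_of_pos (by nlinarith : (0:ℝ) < 4*(1+α+β))]
  have hc1 : ∀ x y : ℝ, (((a1 α β).1 + x*((a2 α β).1-(a1 α β).1) + y*((a3 α β).1-(a1 α β).1),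
      (a1 α β).2 + x*((a2 α β).2-(a1 α β).2) + y*((a3 α β).2-(a1 α β).2)) : ℝ × ℝ)
      = ((-1 - α + 2*α*x + 2*y, 1 - β + (2*β - 2)*x - 2*y) : ℝ × ℝ) := by
    intro x y; simp [a1, a2, a3, Prod.ext_iff]; constructor <;> ring
  have hc2 : ∀ x y : ℝ, (((a1 α β).1 + x*((a3 α β).1-(a1 α β).1) + y*((a4 α β).1-(a1 α β).1),
      (a1 α β).2 + x*((a3 α β).2-(a1 α β).2) + y*((a4 α β).2-(a1 α β).2)) : ℝ × ℝ)
      = ((-1 - α + 2*x + (2 + 2*α)*y, 1 - β - 2*x + 2*β*y) : ℝ × ℝ) := by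
    intro x y; simp [a1, a3, a4, Prod.ext_iff]; constructor <;> ring
  simp_rw [hc1, hc2]

end Aux

set_option maxHeartbeats 2000000 in
/-- Weighted integrals of the derivatives of φ₀ over the reference convex quadrilateral
(entries of the coefficient matrix in the proof of Lemma 3.1), with D = α² + β² + 3,
ξ(p) = p.2, η(p) = p.1, and ∂/∂η, ∂/∂ξ the partial derivatives in the first and second
coordinate directions. -/
theorem phi0_weighted_integrals (α β : ℝ) (hα : 0 < α) (hβ : 0 < β) (hαβ : α + β < 1) :
    (∫ p in Quad α β, fderiv ℝ (phi0 α β) p (1, 0) * p.2) =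
      -8 * α * β / (α ^ 2 + β ^ 2 + 3) ∧
    (∫ p in Quad α β, fderiv ℝ (phi0 α β) p (0, 1) * p.2) =
      (4 * α ^ 2 - 12 * β ^ 2 - 12) / (α ^ 2 + β ^ 2 + 3) ∧
    (∫ p in Quad α β, fderiv ℝ (phi0 α β) p (1, 0) * p.1) =
      (-12 * α ^ 2 + 4 * β ^ 2 - 12) / (α ^ 2 + β ^ 2 + 3) ∧
    (∫ p in Quad α β, fderiv ℝ (phi0 α β) p (0, 1) * p.1) =
      -8 * α * β / (α ^ 2 + β ^ 2 + 3) := by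
  have hD : (α^2+β^2+3 : ℝ) ≠ 0 := by positivity
  have hgη : ∀ p : ℝ × ℝ, fderiv ℝ (phi0 α β) p (1, 0) = (3*β - 9*p.1)/(α^2+β^2+3) :=
    fderiv_phi0_eta α β
  have hgξ : ∀ p : ℝ × ℝ, fderiv ℝ (phi0 α β) p (0, 1) = (3*α - 9*p.2)/(α^2+β^2+3) :=
    fderiv_phi0_xi α β
  refine ⟨?_, ?_, ?_, ?_⟩
  · simp_rw [hgη]
    have main := integral_quad hα hβ hαβ (fun p => (3*β - 9*p.1)/(α^2+β^2+3) * p.2) (by fun_prop)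
    have e1 : ∀ x y : ℝ, (3*β - 9*(-1 - α + 2*α*x + 2*y))/(α^2+β^2+3) * (1 - β + (2*β - 2)*x - 2*y)
        = (9 + (-6)*β + (-3)*β^2 + 9*α + (-9)*α*β)/(α^2+β^2+3) + ((-18) + 12*β + 6*β^2 + (-36)*α + 36*α*β)/(α^2+β^2+3)*x + ((-36) + 12*β + (-18)*α)/(α^2+β^2+3)*y + (36*α + (-36)*α*β)/(α^2+β^2+3)*x^2 + (36 + (-36)*β + 36*α)/(α^2+β^2+3)*(x*y) + (36)/(α^2+β^2+3)*y^2 := by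
      intro x y; field_simp; ring
    have e2 : ∀ x y : ℝ, (3*β - 9*(-1 - α + 2*x + (2 + 2*α)*y))/(α^2+β^2+3) * (1 - β - 2*x + 2*β*y)
        = (9 + (-6)*β + (-3)*β^2 + 9*α + (-9)*α*β)/(α^2+β^2+3) + ((-36) + 12*β + (-18)*α)/(α^2+β^2+3)*x + ((-18) + 36*β + 6*β^2 + (-18)*α + 36*α*β)/(α^2+β^2+3)*y + (36)/(α^2+β^2+3)*x^2 + (36 + (-36)*β + 36*α)/(α^2+β^2+3)*(x*y) + ((-36)*β + (-36)*α*β)/(α^2+β^2+3)*y^2 := by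
      intro x y; field_simp; ring
    simp_rw [e1, e2] at main
    rw [iint_quadratic, iint_quadratic] at main
    exact main.trans (by field_simp; ring)
  · simp_rw [hgξ]
    have main := integral_quad hα hβ hαβ (fun p => (3*α - 9*p.2)/(α^2+β^2+3) * p.2) (by fun_prop)
    have e1 : ∀ x y : ℝ, (3*α - 9*(1 - β + (2*β - 2)*x - 2*y))/(α^2+β^2+3) * (1 - β + (2*β - 2)*x - 2*y)
        = ((-9) + 18*β + (-9)*β^2 + 3*α + (-3)*α*β)/(α^2+β^2+3) + (36 + (-72)*β + 36*β^2 + (-6)*α + 6*α*β)/(α^2+β^2+3)*x + (36 + (-36)*β + (-6)*α)/(α^2+β^2+3)*y + ((-36) + 72*β + (-36)*β^2)/(α^2+β^2+3)*x^2 + ((-72) + 72*β)/(α^2+β^2+3)*(x*y) + ((-36))/(α^2+β^2+3)*y^2 := by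
      intro x y; field_simp; ring
    have e2 : ∀ x y : ℝ, (3*α - 9*(1 - β - 2*x + 2*β*y))/(α^2+β^2+3) * (1 - β - 2*x + 2*β*y)
        = ((-9) + 18*β + (-9)*β^2 + 3*α + (-3)*α*β)/(α^2+β^2+3) + (36 + (-36)*β + (-6)*α)/(α^2+β^2+3)*x + ((-36)*β + 36*β^2 + 6*α*β)/(α^2+β^2+3)*y + ((-36))/(α^2+β^2+3)*x^2 + (72*β)/(α^2+β^2+3)*(x*y) + ((-36)*β^2)/(α^2+β^2+3)*y^2 := by
      intro x y; field_simp; ring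
    simp_rw [e1, e2] at main
    rw [iint_quadratic, iint_quadratic] at main
    exact main.trans (by field_simp; ring)
  · simp_rw [hgη]
    have main := integral_quad hα hβ hαβ (fun p => (3*β - 9*p.1)/(α^2+β^2+3) * p.1) (by fun_prop)
    have e1 : ∀ x y : ℝ, (3*β - 9*(-1 - α + 2*α*x + 2*y))/(α^2+β^2+3) * (-1 - α + 2*α*x + 2*y)
        = ((-9) + (-3)*β + (-18)*α + (-3)*α*β + (-9)*α^2)/(α^2+β^2+3) + (36*α + 6*α*β + 36*α^2)/(α^2+β^2+3)*x + (36 + 6*β + 36*α)/(α^2+β^2+3)*y + ((-36)*α^2)/(α^2+β^2+3)*x^2 + ((-72)*α)/(α^2+β^2+3)*(x*y) + ((-36))/(α^2+β^2+3)*y^2 := by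
      intro x y; field_simp; ring
    have e2 : ∀ x y : ℝ, (3*β - 9*(-1 - α + 2*x + (2 + 2*α)*y))/(α^2+β^2+3) * (-1 - α + 2*x + (2 + 2*α)*y)
        = ((-9) + (-3)*β + (-18)*α + (-3)*α*β + (-9)*α^2)/(α^2+β^2+3) + (36 + 6*β + 36*α)/(α^2+β^2+3)*x + (36 + 6*β + 72*α + 6*α*β + 36*α^2)/(α^2+β^2+3)*y + ((-36))/(α^2+β^2+3)*x^2 + ((-72) + (-72)*α)/(α^2+β^2+3)*(x*y) + ((-36) + (-72)*α + (-36)*α^2)/(α^2+β^2+3)*y^2 := by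
      intro x y; field_simp; ring
    simp_rw [e1, e2] at main
    rw [iint_quadratic, iint_quadratic] at main
    exact main.trans (by field_simp; ring)
  · simp_rw [hgξ]
    have main := integral_quad hα hβ hαβ (fun p => (3*α - 9*p.2)/(α^2+β^2+3) * p.1) (by fun_prop)
    have e1 : ∀ x y : ℝ, (3*α - 9*(1 - β + (2*β - 2)*x - 2*y))/(α^2+β^2+3) * (-1 - α + 2*α*x + 2*y)
        = (9 + (-9)*β + 6*α + (-9)*α*β + (-3)*α^2)/(α^2+β^2+3) + ((-18) + 18*β + (-36)*α + 36*α*β + 6*α^2)/(α^2+β^2+3)*x + ((-36) + 18*β + (-12)*α)/(α^2+β^2+3)*y + (36*α + (-36)*α*β)/(α^2+β^2+3)*x^2 + (36 + (-36)*β + 36*α)/(α^2+β^2+3)*(x*y) + (36)/(α^2+β^2+3)*y^2 := by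
      intro x y; field_simp; ring
    have e2 : ∀ x y : ℝ, (3*α - 9*(1 - β - 2*x + 2*β*y))/(α^2+β^2+3) * (-1 - α + 2*x + (2 + 2*α)*y)
        = (9 + (-9)*β + 6*α + (-9)*α*β + (-3)*α^2)/(α^2+β^2+3) + ((-36) + 18*β + (-12)*α)/(α^2+β^2+3)*x + ((-18) + 36*β + (-12)*α + 36*α*β + 6*α^2)/(α^2+β^2+3)*y + (36)/(α^2+β^2+3)*x^2 + (36 + (-36)*β + 36*α)/(α^2+β^2+3)*(x*y) + ((-36)*β + (-36)*α*β)/(α^2+β^2+3)*y^2 := by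
      intro x y; field_simp; ring
    simp_rw [e1, e2] at main
    rw [iint_quadratic, iint_quadratic] at main
    exact main.trans (by field_simp; ring)
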